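/- Let ξₙ, ξ : ℝ → ℝ be measurable, δ > 0, and T a real random variable with density g, and let W ∈ L²(Ω) with W ≥ 0. Suppose sup_s |ξₙ(s) − ξ(s)|·1_{g(s) > δ/2} → 0 in probability and E[ξ(T)² W² 1_{g(T) < 2δ}] → 0 as δ → 0. Then along a sequence δₙ → 0 chosen appropriately, E[(ξₙ(T)1_{ĝₙ(T)>δₙ} − ξ(T))² W²] → 0 in probability, provided additionally that {ĝₙ(T) > δₙ} ⊆ {g(T) > δₙ/2} and {ĝₙ(T) ≤ δₙ} ⊆ {g(T) < 2δₙ} eventually with probability tending to 1. -/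

import Mathlib

open MeasureTheory Filter

/-- The cut-off argument in the construction of the estimated score: if the estimated score
`ξₙ` (built from a training sample `ω' ∈ Ω'`) converges uniformly in probability to `ξ = g'/g`
on `{g > δₙ/2}`, the tail term `E[ξ(T)² W² 1_{g(T) < 2δ}] → 0` as `δ → 0`, and the estimated
density truncation events are eventually sandwiched, `{ĝₙ > δₙ} ⊆ {g > δₙ/2}` and
`{ĝₙ ≤ δₙ} ⊆ {g < 2δₙ}`, then `E[(ξₙ(T) 1_{ĝₙ(T) > δₙ} − ξ(T))² W²] → 0` in probability. -/
theorem stmt18 {Ω Ω' : Type*} {mΩ : MeasurableSpace Ω} {mΩ' : MeasurableSpace Ω'}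
    {μ : Measure Ω} [IsProbabilityMeasure μ] {ν : Measure Ω'} [IsProbabilityMeasure ν]
    (T : Ω → ℝ) (hT : Measurable T)
    (W : Ω → ℝ) (hW : Measurable W) (hWpos : ∀ ω, 0 ≤ W ω)
    (hW2 : Integrable (fun ω => W ω ^ 2) μ)
    (g : ℝ → ℝ) (hg : Measurable g)
    (ξ : ℝ → ℝ) (hξ : Measurable ξ)
    (ξn : ℕ → Ω' → ℝ → ℝ) (gn : ℕ → Ω' → ℝ → ℝ)
    (δ : ℕ → ℝ) (hδpos : ∀ n, 0 < δ n) (hδ0 : Tendsto δ atTop (nhds 0))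
    (hsup : ∀ ε > (0 : ℝ), Tendsto
      (fun n => ν {ω' | ∃ s, δ n / 2 < g s ∧ ε < |ξn n ω' s - ξ s|}) atTop (nhds 0))
    (htail : ∀ ε > (0 : ℝ), ∃ d₀ > (0 : ℝ), ∀ d, 0 < d → d ≤ d₀ →
      ∫ ω, ξ (T ω) ^ 2 * W ω ^ 2 *
        Set.indicator {ω | g (T ω) < 2 * d} (fun _ => (1 : ℝ)) ω ∂μ ≤ ε)
    (hsandwich : Tendsto (fun n => ν {ω' | ¬ ∀ ω,
      (δ n < gn n ω' (T ω) → δ n / 2 < g (T ω)) ∧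
      (gn n ω' (T ω) ≤ δ n → g (T ω) < 2 * δ n)}) atTop (nhds 0)) :
    ∀ ε > (0 : ℝ), Tendsto (fun n => ν {ω' | ε <
      ∫ ω, ((if δ n < gn n ω' (T ω) then ξn n ω' (T ω) else 0) - ξ (T ω)) ^ 2 * W ω ^ 2 ∂μ})
      atTop (nhds 0) := by
  intro ε hε
  obtain ⟨d₀, hd₀, htail'⟩ := htail (ε/2) (by linarith)
  set C := ∫ ω, W ω ^ 2 ∂μ with hCdef
  have hC : 0 ≤ C := integral_nonneg fun ω => sq_nonneg _
  set ε' : ℝ := Real.sqrt (ε/2/(C+1)) with hε'def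
  have hε'pos : 0 < ε' := Real.sqrt_pos.mpr (by positivity)
  have hε'sq : ε' ^ 2 * C ≤ ε / 2 := by
    have h1 : ε' ^ 2 = ε/2/(C+1) := Real.sq_sqrt (by positivity)
    rw [h1, div_mul_eq_mul_div, div_le_iff₀ (by positivity)]
    nlinarith
  -- the tail lintegral
  set P : ℝ → ENNReal := fun d => ∫⁻ ω, ENNReal.ofReal (ξ (T ω) ^ 2 * W ω ^ 2 *
      Set.indicator {ω | g (T ω) < 2 * d} (fun _ => (1 : ℝ)) ω) ∂μ with hPdef
  have hPmono : ∀ d' d : ℝ, d' ≤ d → P d' ≤ P d := by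
    intro d' d hdd
    refine lintegral_mono fun ω => ENNReal.ofReal_le_ofReal ?_
    refine mul_le_mul_of_nonneg_left ?_ (by positivity)
    exact Set.indicator_le_indicator_of_subset (s := {ω | g (T ω) < 2 * d'})
      (t := {ω | g (T ω) < 2 * d})
      (fun ω (hω : g (T ω) < 2 * d') => show g (T ω) < 2 * d by linarith)
      (fun _ => zero_le_one) ω
  -- the key inclusion
  have hsub : ∀ᶠ n in atTop,
      {ω' | ε < ∫ ω, ((if δ n < gn n ω' (T ω) then ξn n ω' (T ω) else 0) - ξ (T ω)) ^ 2 * W ω ^ 2 ∂μ}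
      ⊆ {ω' | ∃ s, δ n / 2 < g s ∧ ε' < |ξn n ω' s - ξ s|} ∪ {ω' | ¬ ∀ ω,
        (δ n < gn n ω' (T ω) → δ n / 2 < g (T ω)) ∧
        (gn n ω' (T ω) ≤ δ n → g (T ω) < 2 * δ n)} := by
    by_cases hcase : ∃ d₁ > (0:ℝ), P d₁ < ⊤
    · -- case A: tail integrable for small d
      obtain ⟨d₁, hd₁, hPfin⟩ := hcase
      have hev : ∀ᶠ n in atTop, δ n < min d₀ d₁ :=
        hδ0.eventually (gt_mem_nhds (lt_min hd₀ hd₁))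
      filter_upwards [hev] with n hn ω' hω'
      by_contra hbad
      rw [Set.mem_union] at hbad
      obtain ⟨hs, hw⟩ := not_or.mp hbad
      simp only [Set.mem_setOf_eq, not_exists, not_and, not_lt] at hs
      replace hw : ∀ ω, (δ n < gn n ω' (T ω) → δ n / 2 < g (T ω)) ∧
          (gn n ω' (T ω) ≤ δ n → g (T ω) < 2 * δ n) := not_not.mp hw
      -- the dominating function
      set H : Ω → ℝ := fun ω => ε' ^ 2 * W ω ^ 2 + ξ (T ω) ^ 2 * W ω ^ 2 *
        Set.indicator {ω | g (T ω) < 2 * δ n} (fun _ => (1 : ℝ)) ω with hHdef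
      have hSmeas : MeasurableSet {ω | g (T ω) < 2 * δ n} :=
        measurableSet_lt (hg.comp hT) measurable_const
      have hmeas2 : Measurable (fun ω => ξ (T ω) ^ 2 * W ω ^ 2 *
          Set.indicator {ω | g (T ω) < 2 * δ n} (fun _ => (1 : ℝ)) ω) :=
        (((hξ.comp hT).pow_const 2).mul (hW.pow_const 2)).mul
          (measurable_const.indicator hSmeas)
      have hnn2 : ∀ ω, 0 ≤ ξ (T ω) ^ 2 * W ω ^ 2 *
          Set.indicator {ω | g (T ω) < 2 * δ n} (fun _ => (1 : ℝ)) ω := fun ω => by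
        have : (0:ℝ) ≤ Set.indicator {ω | g (T ω) < 2 * δ n} (fun _ => (1 : ℝ)) ω :=
          Set.indicator_nonneg (fun _ _ => zero_le_one) ω
        positivity
      have hInt2 : Integrable (fun ω => ξ (T ω) ^ 2 * W ω ^ 2 *
          Set.indicator {ω | g (T ω) < 2 * δ n} (fun _ => (1 : ℝ)) ω) μ := by
        refine ⟨hmeas2.aestronglyMeasurable, ?_⟩
        rw [hasFiniteIntegral_iff_ofReal (Filter.Eventually.of_forall hnn2)]
        exact lt_of_le_of_lt (hPmono _ _ (le_of_lt (lt_of_lt_of_le hn (min_le_right _ _)))) hPfin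
      have hIntH : Integrable H μ := (hW2.const_mul _).add hInt2
      have hdom : ∀ ω, ((if δ n < gn n ω' (T ω) then ξn n ω' (T ω) else 0) - ξ (T ω)) ^ 2 * W ω ^ 2
          ≤ H ω := by
        intro ω
        by_cases hgn : δ n < gn n ω' (T ω)
        · rw [if_pos hgn]
          have hg1 : δ n / 2 < g (T ω) := (hw ω).1 hgn
          have h1 : |ξn n ω' (T ω) - ξ (T ω)| ≤ ε' := hs _ hg1
          have h2 : (ξn n ω' (T ω) - ξ (T ω)) ^ 2 ≤ ε' ^ 2 := by
            rw [← sq_abs]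
            exact pow_le_pow_left₀ (abs_nonneg _) h1 2
          have h3 := mul_le_mul_of_nonneg_right h2 (sq_nonneg (W ω))
          refine le_trans h3 (le_add_of_nonneg_right (hnn2 ω))
        · rw [if_neg hgn]
          have hg2 : g (T ω) < 2 * δ n := (hw ω).2 (not_lt.mp hgn)
          have hind : Set.indicator {ω | g (T ω) < 2 * δ n} (fun _ => (1 : ℝ)) ω = 1 :=
            Set.indicator_of_mem (show ω ∈ {ω | g (T ω) < 2 * δ n} from hg2) (fun _ => (1 : ℝ))
          have : (0 - ξ (T ω)) ^ 2 * W ω ^ 2 = ξ (T ω) ^ 2 * W ω ^ 2 *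
              Set.indicator {ω | g (T ω) < 2 * δ n} (fun _ => (1 : ℝ)) ω := by
            rw [hind]; ring
          rw [this]
          exact le_add_of_nonneg_left (by positivity)
      have hle : ∫ ω, ((if δ n < gn n ω' (T ω) then ξn n ω' (T ω) else 0) - ξ (T ω)) ^ 2 * W ω ^ 2 ∂μ
          ≤ ∫ ω, H ω ∂μ :=
        integral_mono_of_nonneg (Filter.Eventually.of_forall fun ω => by positivity) hIntH
          (Filter.Eventually.of_forall hdom)
      have hHval : ∫ ω, H ω ∂μ ≤ ε := by
        rw [hHdef]
        rw [integral_add (hW2.const_mul _) hInt2, integral_const_mul]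
        have ht := htail' (δ n) (hδpos n) (le_of_lt (lt_of_lt_of_le hn (min_le_left _ _)))
        have : ε' ^ 2 * C ≤ ε / 2 := hε'sq
        linarith
      exact absurd hω' (not_lt.mpr (le_trans hle hHval))
    · -- case B: tail not integrable for any d > 0
      push_neg at hcase
      filter_upwards with n ω' hω'
      by_contra hbad
      rw [Set.mem_union] at hbad
      obtain ⟨_, hw⟩ := not_or.mp hbad
      replace hw : ∀ ω, (δ n < gn n ω' (T ω) → δ n / 2 < g (T ω)) ∧
          (gn n ω' (T ω) ≤ δ n → g (T ω) < 2 * δ n) := not_not.mp hw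
      -- the integrand is not integrable, so the integral is 0
      have hge : ∀ ω, ξ (T ω) ^ 2 * W ω ^ 2 *
          Set.indicator {ω | g (T ω) < 2 * (δ n / 4)} (fun _ => (1 : ℝ)) ω
          ≤ ((if δ n < gn n ω' (T ω) then ξn n ω' (T ω) else 0) - ξ (T ω)) ^ 2 * W ω ^ 2 := by
        intro ω
        by_cases hmem : g (T ω) < 2 * (δ n / 4)
        · have hind : Set.indicator {ω | g (T ω) < 2 * (δ n / 4)} (fun _ => (1 : ℝ)) ω = 1 :=
            Set.indicator_of_mem (show ω ∈ {ω | g (T ω) < 2 * (δ n / 4)} from hmem) (fun _ => (1 : ℝ))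
          have hgn : ¬ δ n < gn n ω' (T ω) := fun h => by
            have := (hw ω).1 h; linarith
          rw [if_neg hgn, hind]
          have : (0 - ξ (T ω)) ^ 2 * W ω ^ 2 = ξ (T ω) ^ 2 * W ω ^ 2 := by ring
          rw [this, mul_one]
        · rw [Set.indicator_of_notMem
              (show ω ∉ {ω | g (T ω) < 2 * (δ n / 4)} from hmem) (fun _ => (1 : ℝ)), mul_zero]
          positivity
      have hlin : P (δ n / 4) ≤ ∫⁻ ω, ENNReal.ofReal
          (((if δ n < gn n ω' (T ω) then ξn n ω' (T ω) else 0) - ξ (T ω)) ^ 2 * W ω ^ 2) ∂μ :=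
        lintegral_mono fun ω => ENNReal.ofReal_le_ofReal (hge ω)
      have hPtop : P (δ n / 4) = ⊤ :=
        top_le_iff.mp (hcase (δ n / 4) (by have := hδpos n; linarith))
      have hnotint : ¬ Integrable (fun ω =>
          ((if δ n < gn n ω' (T ω) then ξn n ω' (T ω) else 0) - ξ (T ω)) ^ 2 * W ω ^ 2) μ := by
        intro hI
        have hfi := hI.hasFiniteIntegral
        rw [hasFiniteIntegral_iff_ofReal (Filter.Eventually.of_forall fun ω => by positivity)] at hfi
        rw [hPtop] at hlin
        exact absurd hfi (not_lt.mpr hlin)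
      have h0 := integral_undef hnotint
      simp only [Set.mem_setOf_eq] at hω'
      rw [h0] at hω'
      linarith
  -- conclude by squeezing
  have hbound : ∀ᶠ n in atTop,
      ν {ω' | ε < ∫ ω, ((if δ n < gn n ω' (T ω) then ξn n ω' (T ω) else 0) - ξ (T ω)) ^ 2 * W ω ^ 2 ∂μ}
      ≤ ν {ω' | ∃ s, δ n / 2 < g s ∧ ε' < |ξn n ω' s - ξ s|} + ν {ω' | ¬ ∀ ω,
        (δ n < gn n ω' (T ω) → δ n / 2 < g (T ω)) ∧
        (gn n ω' (T ω) ≤ δ n → g (T ω) < 2 * δ n)} := by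
    filter_upwards [hsub] with n hn
    exact le_trans (measure_mono hn) (measure_union_le _ _)
  have hsum : Tendsto (fun n => ν {ω' | ∃ s, δ n / 2 < g s ∧ ε' < |ξn n ω' s - ξ s|} + ν {ω' | ¬ ∀ ω,
        (δ n < gn n ω' (T ω) → δ n / 2 < g (T ω)) ∧
        (gn n ω' (T ω) ≤ δ n → g (T ω) < 2 * δ n)}) atTop (nhds 0) := by
    simpa using (hsup ε' hε'pos).add hsandwich
  exact tendsto_of_tendsto_of_tendsto_of_le_of_le' tendsto_const_nhds hsum
    (Filter.Eventually.of_forall fun n => zero_le) hbound
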